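/- arXiv:math/9501206 — 3 statements merged into one kernel-verified Lean document; each statement's English description precedes it below -/
import Mathlib

section
/- Let T ⊆ 𝒯 be a nonempty subtree (closed under initial segments). Then T satisfies condition (4) — for every s ∈ T and every m there exists t ∈ T with s ⊆ t such that t has at least (P_{ind(t)})^m successors in T — if and only if the following two conditions hold: (i) every s ∈ T has at least one successor in T; and (ii) for every n, if the node s with ind(s) = n belongs to T, then there exists k such that the node t with ind(t) = k satisfies t ∈ T, s ⊆ t, and t has at least P_k^n successors in T. -/
/-- `P_0 = 1` and `P_{k+1} = P_k · N_k`, where `N_0 = 1` and `N_k = 2 ^ P_k`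
for `k ≥ 1`; hence `P_k = N_0 · N_1 · … · N_{k-1}`. -/
def Pseq : ℕ → ℕ
  | 0 => 1
  | k + 1 => Pseq k * (if k = 0 then 1 else 2 ^ Pseq k)

/-- `N_0 = 1` and `N_k = 2 ^ P_k` for `k ≥ 1`
(so `N_k = 1, 2, 4, 256, 2^2048, …`). -/
def Nseq (k : ℕ) : ℕ := if k = 0 then 1 else 2 ^ Pseq k

/-- A tree: a set of finite sequences of natural numbers closed under
initial segments. -/
def IsTree (T : Set (List ℕ)) : Prop :=
  ∀ s ∈ T, ∀ t : List ℕ, t <+: s → t ∈ T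

/-- The node `t` has at least `n` successors in `T`, i.e. there are at least
`n` distinct `i` with `t ⌢ i ∈ T`. -/
def HasAtLeastSucc (T : Set (List ℕ)) (t : List ℕ) (n : ℕ) : Prop :=
  ∃ S : Finset ℕ, S.card = n ∧ ∀ i ∈ S, t ++ [i] ∈ T

/-- `(Tr, ind)` is the master tree together with its index function:
`Tr` is a tree, `ind` is a bijection of `Tr` onto `ℕ` with `ind(⟨⟩) = 0`,
`ind` respects length and (for equal lengths) the lexicographic order, and
every `s ∈ Tr` with `ind s = k` has exactly the `N_k` successors `s ⌢ i`,
`i < N_k`, in `Tr`. -/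
def IsMasterTree (Tr : Set (List ℕ)) (ind : List ℕ → ℕ) : Prop :=
  IsTree Tr ∧
  Set.BijOn ind Tr Set.univ ∧
  ind [] = 0 ∧
  (∀ s ∈ Tr, ∀ t ∈ Tr, s.length < t.length → ind s < ind t) ∧
  (∀ s ∈ Tr, ∀ t ∈ Tr, s.length = t.length → List.Lex (· < ·) s t → ind s < ind t) ∧
  (∀ s ∈ Tr, ∀ i : ℕ, s ++ [i] ∈ Tr ↔ i < Nseq (ind s))

/-- `T` belongs to the forcing notion `𝒫`: `T` is a nonempty subtree of the
master tree `Tr` such that for every `s ∈ T` and every `m` there is a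
`t ∈ T` extending `s` with at least `(P_{ind t})^m` successors in `T`. -/
def InForcing (Tr : Set (List ℕ)) (ind : List ℕ → ℕ) (T : Set (List ℕ)) : Prop :=
  T.Nonempty ∧ T ⊆ Tr ∧ IsTree T ∧
  ∀ s ∈ T, ∀ m : ℕ, ∃ t ∈ T, s <+: t ∧ HasAtLeastSucc T t (Pseq (ind t) ^ m)

lemma Pseq_pos (k : ℕ) : 0 < Pseq k := by
  induction k with
  | zero => simp [Pseq]
  | succ k ih =>
    rw [Pseq]
    exact Nat.mul_pos ih (by split <;> positivity)

lemma HasAtLeastSucc.mono {T : Set (List ℕ)} {t : List ℕ} {a b : ℕ}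
    (h : HasAtLeastSucc T t a) (hba : b ≤ a) : HasAtLeastSucc T t b := by
  obtain ⟨S, hcard, hS⟩ := h
  obtain ⟨S', hsub, hcard'⟩ := Finset.exists_subset_card_eq (hcard ▸ hba)
  exact ⟨S', hcard', fun i hi => hS i (hsub hi)⟩

/-- A nonempty subtree `T ⊆ 𝒯` satisfies condition (4) — for every `s ∈ T`
and every `m` there is `t ∈ T` with `s ⊆ t` having at least `(P_{ind t})^m`
successors in `T` — if and only if (i) every `s ∈ T` has at least one
successor in `T`, and (ii) for every `n`, if the node `s` with `ind s = n`
is in `T` then there is a `k` such that the node `t` with `ind t = k`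
satisfies `t ∈ T`, `s ⊆ t`, and `t` has at least `P_k ^ n` successors
in `T`. -/
theorem condition_four_iff_condition_five
    (Tr : Set (List ℕ)) (ind : List ℕ → ℕ) (hM : IsMasterTree Tr ind)
    (T : Set (List ℕ)) (hne : T.Nonempty) (hsub : T ⊆ Tr) (htree : IsTree T) :
    (∀ s ∈ T, ∀ m : ℕ, ∃ t ∈ T, s <+: t ∧ HasAtLeastSucc T t (Pseq (ind t) ^ m)) ↔
      ((∀ s ∈ T, ∃ i : ℕ, s ++ [i] ∈ T) ∧
       (∀ n : ℕ, ∀ s ∈ Tr, ind s = n → s ∈ T →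
          ∃ k : ℕ, ∃ t ∈ Tr, ind t = k ∧ t ∈ T ∧ s <+: t ∧
            HasAtLeastSucc T t (Pseq k ^ n))) := by
  obtain ⟨hTr, hbij, hnil, hlen, hlex, hsucc⟩ := hM
  constructor
  · intro h4
    constructor
    · intro s hs
      obtain ⟨t, ht, hst, hle⟩ := h4 s hs 1
      obtain ⟨S, hcard, hS⟩ := hle
      have hpos : 0 < S.card := by
        rw [hcard, pow_one]; exact Pseq_pos _
      obtain ⟨i, hi⟩ := Finset.card_pos.mp hpos
      have hu : t ++ [i] ∈ T := hS i hi
      have hlt : s.length < (t ++ [i]).length := by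
        have := hst.length_le; simp; omega
      obtain ⟨r', hr'⟩ : s <+: t ++ [i] := hst.trans ⟨[i], rfl⟩
      cases r' with
      | nil =>
        rw [List.append_nil] at hr'
        exact absurd (hr' ▸ hlt) (lt_irrefl _)
      | cons a r'' =>
        refine ⟨a, htree _ hu (s ++ [a]) ⟨r'', ?_⟩⟩
        simp [← hr']
    · intro n s hsTr hind hsT
      obtain ⟨t, ht, hst, hle⟩ := h4 s hsT n
      exact ⟨ind t, t, hsub ht, rfl, ht, hst, hle⟩
  · rintro ⟨h1, h2⟩ s hs m
    -- extend s to s' with m ≤ ind s'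
    have key : ∀ m : ℕ, ∃ s' ∈ T, s <+: s' ∧ m ≤ ind s' := by
      intro m
      induction m with
      | zero => exact ⟨s, hs, List.prefix_rfl, Nat.zero_le _⟩
      | succ m ih =>
        obtain ⟨s', hs', hss', hm⟩ := ih
        obtain ⟨i, hi⟩ := h1 s' hs'
        refine ⟨s' ++ [i], hi, hss'.trans ⟨[i], rfl⟩, ?_⟩
        have := hlen s' (hsub hs') (s' ++ [i]) (hsub hi) (by simp)
        omega
    obtain ⟨s', hs', hss', hm⟩ := key m
    obtain ⟨k, t, htTr, hk, htT, hst, hle⟩ := h2 (ind s') s' (hsub hs') rfl hs'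
    refine ⟨t, htT, hss'.trans hst, ?_⟩
    exact (hk ▸ hle).mono (Nat.pow_le_pow_right (Pseq_pos _) hm)
end

section
/- If T ∈ P and a ∈ T, then (T)_a = {s ∈ T : s ⊆ a or a ⊆ s} also belongs to P. -/
/-- If `T ∈ 𝒫` and `a ∈ T`, then `(T)_a = {s ∈ T : s ⊆ a or a ⊆ s}` also
belongs to `𝒫`. -/
theorem restrict_mem_forcing
    (Tr : Set (List ℕ)) (ind : List ℕ → ℕ) (hM : IsMasterTree Tr ind)
    (T : Set (List ℕ)) (hT : InForcing Tr ind T) (a : List ℕ) (ha : a ∈ T) :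
    InForcing Tr ind {s ∈ T | s <+: a ∨ a <+: s} := by
  obtain ⟨hne, hsub, htree, hbr⟩ := hT
  refine ⟨⟨a, ha, Or.inl List.prefix_rfl⟩, fun s hs => hsub hs.1, ?_, ?_⟩
  · intro s hs t hts
    refine ⟨htree s hs.1 t hts, ?_⟩
    rcases hs.2 with h | h
    · exact Or.inl (hts.trans h)
    · exact List.prefix_or_prefix_of_prefix hts h
  · intro s hs m
    rcases hs.2 with h | h
    · obtain ⟨t, htT, hat, S, hc, hS⟩ := hbr a ha m
      exact ⟨t, ⟨htT, Or.inr hat⟩, h.trans hat, S, hc,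
        fun i hi => ⟨hS i hi, Or.inr (hat.trans (List.prefix_append t [i]))⟩⟩
    · obtain ⟨t, htT, hst, S, hc, hS⟩ := hbr s hs.1 m
      exact ⟨t, ⟨htT, Or.inr (h.trans hst)⟩, hst, S, hc,
        fun i hi => ⟨hS i hi, Or.inr ((h.trans hst).trans (List.prefix_append t [i]))⟩⟩
end

section
/- Let (T_n)_{n=0}^∞ and (l_n)_{n=0}^∞ be sequences such that: each T_n ∈ P; T_0 ⊇ T_1 ⊇ … ⊇ T_n ⊇ …; l_0 < l_1 < … < l_n < …; T_{n+1} ∩ ω^{l_n} = T_n ∩ ω^{l_n} for every n; and for every n, if the node s_n (the unique node of 𝒯 with ind(s_n) = n) belongs to T_n, then there exists t ∈ T_{n+1} with s_n ⊊ t and length(t) < l_{n+1} such that t has at least (P_{ind(t)})^n successors in T_{n+1}. Then T = ⋂_{n=0}^∞ T_n belongs to P. -/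
/-- Fusion: if `(T_n)` is a decreasing sequence in `𝒫`, `(l_n)` is strictly
increasing, `T_{n+1} ∩ ω^{l_n} = T_n ∩ ω^{l_n}`, and for every `n`, whenever
the node `s_n` (with `ind s_n = n`) belongs to `T_n` there is `t ∈ T_{n+1}`
properly extending `s_n` with `length t < l_{n+1}` and at least
`(P_{ind t})^n` successors in `T_{n+1}`, then `⋂ₙ T_n ∈ 𝒫`. -/
theorem fusion_mem_forcing
    (Tr : Set (List ℕ)) (ind : List ℕ → ℕ) (hM : IsMasterTree Tr ind)
    (T : ℕ → Set (List ℕ)) (l : ℕ → ℕ)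
    (h1 : ∀ n, InForcing Tr ind (T n))
    (h2 : ∀ n, T (n + 1) ⊆ T n)
    (h3 : StrictMono l)
    (h4 : ∀ n, {s ∈ T (n + 1) | s.length = l n} = {s ∈ T n | s.length = l n})
    (h5 : ∀ n, ∀ sn ∈ Tr, ind sn = n → sn ∈ T n →
      ∃ t ∈ T (n + 1), sn <+: t ∧ sn ≠ t ∧ t.length < l (n + 1) ∧
        HasAtLeastSucc (T (n + 1)) t (Pseq (ind t) ^ n)) :
    InForcing Tr ind (⋂ n, T n) := by
  obtain ⟨hTrTree, hBij, hnil, hlen, hlex, hsucc⟩ := hM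
  have hTsub : ∀ n, T n ⊆ Tr := fun n => (h1 n).2.1
  have hTree : ∀ n, IsTree (T n) := fun n => (h1 n).2.2.1
  have hmono : ∀ a b : ℕ, a ≤ b → T b ⊆ T a := by
    intro a b hab
    induction b with
    | zero => simp_all
    | succ b ih =>
      rcases Nat.lt_or_ge a (b+1) with h | h
      · exact (h2 b).trans (ih (by omega))
      · have : a = b + 1 := by omega
        subst this; exact le_refl _
  have hnilmem : ∀ n, [] ∈ T n := by
    intro n
    obtain ⟨s, hs⟩ := (h1 n).1
    exact hTree n s hs [] List.nil_prefix
  -- one-step extension inside each `T n`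
  have hext1 : ∀ n, ∀ s ∈ T n, ∃ j, s ++ [j] ∈ T n := by
    intro n s hs
    obtain ⟨t, ht, hst, S, hScard, hSmem⟩ := (h1 n).2.2.2 s hs 0
    have hS1 : S.Nonempty := by
      rw [← Finset.card_pos, hScard]; simp
    obtain ⟨i, hi⟩ := hS1
    have hu : t ++ [i] ∈ T n := hSmem i hi
    obtain ⟨r, hr⟩ := hst
    rcases r with _ | ⟨j, r'⟩
    · refine ⟨i, ?_⟩
      have : s = t := by simpa using hr
      rwa [this]
    · refine ⟨j, hTree n t ht (s ++ [j]) ⟨r', ?_⟩⟩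
      rw [← hr]; simp
  -- extensions of arbitrary length inside each `T n`
  have hextLen : ∀ n, ∀ s ∈ T n, ∀ k, ∃ t ∈ T n, s <+: t ∧ t.length = s.length + k := by
    intro n s hs k
    induction k with
    | zero => exact ⟨s, hs, List.prefix_refl s, rfl⟩
    | succ k ih =>
      obtain ⟨t, ht, hst, hlt⟩ := ih
      obtain ⟨j, hj⟩ := hext1 n t ht
      exact ⟨t ++ [j], hj, hst.trans ⟨[j], rfl⟩, by simp only [List.length_append, List.length_singleton, hlt]; omega⟩
  -- stabilization: short nodes of `T n` lie in every `T k`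
  have hstab1 : ∀ n, ∀ s ∈ T n, s.length ≤ l n → s ∈ T (n+1) := by
    intro n s hs hsl
    obtain ⟨t, ht, hst, hlt⟩ := hextLen n s hs (l n - s.length)
    have hlt' : t.length = l n := by omega
    have htmem : t ∈ {x ∈ T (n+1) | x.length = l n} := by
      rw [h4 n]; exact ⟨ht, hlt'⟩
    exact hTree (n+1) t htmem.1 s hst
  have hstab : ∀ n, ∀ s ∈ T n, s.length ≤ l n → ∀ k, s ∈ T k := by
    intro n s hs hsl k
    rcases le_or_gt k n with h | h
    · exact hmono k n h hs
    · have haux : ∀ j, s ∈ T (n + j) := by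
        intro j
        induction j with
        | zero => exact hs
        | succ j ih =>
          exact hstab1 (n+j) s ih (hsl.trans (h3.monotone (Nat.le_add_right n j)))
      have := haux (k - n)
      rwa [Nat.add_sub_cancel' h.le] at this
  -- index dominates length
  have hind_ge : ∀ u, u ∈ Tr → u.length ≤ ind u := by
    intro u
    induction u using List.reverseRecOn with
    | nil => intro _; exact Nat.zero_le _
    | append_singleton v i ih =>
      intro hu
      have hv : v ∈ Tr := hTrTree _ hu v ⟨[i], rfl⟩
      have hlt := hlen v hv _ hu (by simp)
      have hvl := ih hv
      simp only [List.length_append, List.length_singleton]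
      omega
  refine ⟨⟨[], Set.mem_iInter.2 hnilmem⟩, (Set.iInter_subset T 0).trans (hTsub 0), ?_, ?_⟩
  · intro s hs t hts
    exact Set.mem_iInter.2 fun n => hTree n s (Set.mem_iInter.1 hs n) t hts
  · intro s hs m
    have hsn : ∀ n, s ∈ T n := Set.mem_iInter.1 hs
    set L := max s.length m with hL
    obtain ⟨u, hu, hsu, hul⟩ := hextLen L s (hsn L) (L - s.length)
    have hulen : u.length = L := by omega
    have huTr : u ∈ Tr := hTsub L hu
    have huAll : ∀ k, u ∈ T k := fun k => hstab L u hu (by rw [hulen]; exact h3.le_apply) k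
    set n := ind u with hn
    have hmn : m ≤ n := le_trans (le_max_right _ _) (hulen ▸ hind_ge u huTr)
    obtain ⟨t, ht, hut, _, htl, S, hScard, hSmem⟩ := h5 n u huTr rfl (huAll n)
    have htshort : ∀ x ∈ T (n+1), x.length ≤ l (n+1) → ∀ k, x ∈ T k :=
      fun x hx hxl => hstab (n+1) x hx hxl
    have htAll : t ∈ ⋂ k, T k := Set.mem_iInter.2 (htshort t ht htl.le)
    have hcard_le : Pseq (ind t) ^ m ≤ S.card := by
      rw [hScard]
      exact Nat.pow_le_pow_right (Pseq_pos _) hmn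
    obtain ⟨S', hS'sub, hS'card⟩ := Finset.exists_subset_card_eq hcard_le
    refine ⟨t, htAll, hsu.trans hut, S', hS'card, ?_⟩
    intro i hi
    have hmem : t ++ [i] ∈ T (n+1) := hSmem i (hS'sub hi)
    refine Set.mem_iInter.2 (htshort (t ++ [i]) hmem ?_)
    simp only [List.length_append, List.length_singleton]
    omega
end
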